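/- Let f : ℝ → ℝ be differentiable and g : (−t₁, 0] → ℝ differentiable with g' = k − g², f' ≤ k − f² on ℝ (restricted appropriately), and f(t₀) = g(0). Then f(t₀ + t) ≥ g(t) for all t ∈ (−t₁, 0]. -/

import Mathlib

open Set Real

theorem riccati_backward_comparison (k t₀ t₁ : ℝ) (hk : 0 < k) (ht₁ : 0 < t₁)
    (f g : ℝ → ℝ) (hf : Differentiable ℝ f)
    (hg : ∀ t ∈ Set.Ioc (-t₁) (0 : ℝ), HasDerivAt g (k - (g t) ^ 2) t)
    (hineq : ∀ t : ℝ, deriv f t ≤ k - (f t) ^ 2)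
    (hinit : f t₀ = g 0) :
    ∀ t ∈ Set.Ioc (-t₁) (0 : ℝ), f (t₀ + t) ≥ g t := by
  intro t ht
  obtain ⟨ht1, ht0⟩ := ht
  set s : ℝ := -t with hs
  have hs0 : 0 ≤ s := by simp [hs]; linarith
  have hst : s < t₁ := by simp [hs]; linarith
  set F : ℝ → ℝ := fun x => -f (t₀ - x) with hF
  set B : ℝ → ℝ := fun x => -g (-x) with hB
  -- membership lemma
  have hmem : ∀ x ∈ Icc (0:ℝ) s, -x ∈ Ioc (-t₁) (0:ℝ) := by
    intro x hx
    constructor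
    · have := hx.2; linarith
    · linarith [hx.1]
  -- derivative of F
  have hF' : ∀ x : ℝ, HasDerivAt F (deriv f (t₀ - x)) x := by
    intro x
    have h1 : HasDerivAt (fun y : ℝ => t₀ - y) (-1) x := by
      exact (hasDerivAt_id' x).const_sub t₀
    have h2 : HasDerivAt (fun y : ℝ => f (t₀ - y)) (deriv f (t₀ - x) * (-1)) x :=
      ((hf (t₀ - x)).hasDerivAt).comp x h1
    have := h2.neg
    exact this.congr_deriv (by ring)
  -- derivative of B
  have hB' : ∀ x ∈ Icc (0:ℝ) s, HasDerivAt B (k - (B x) ^ 2) x := by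
    intro x hx
    have h0 := hg (-x) (hmem x hx)
    have h1 : HasDerivAt (fun y : ℝ => -y) (-1 : ℝ) x := by
      exact (hasDerivAt_id' x).neg
    have h2 : HasDerivAt (fun y : ℝ => g (-y)) ((k - (g (-x)) ^ 2) * (-1)) x :=
      h0.comp x h1
    have h3 := h2.neg
    have : B x ^ 2 = (g (-x)) ^ 2 := by simp [hB]
    rw [this]
    exact h3.congr_deriv (by ring)
  -- continuity
  have hBc : ContinuousOn B (Icc (0:ℝ) s) := fun x hx =>
    ((hB' x hx).continuousAt).continuousWithinAt
  have hFc : ContinuousOn F (Icc (0:ℝ) s) :=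
    ((hf.continuous.comp (by continuity : Continuous fun y : ℝ => t₀ - y)).neg).continuousOn
  -- bound on B
  obtain ⟨C, hC⟩ : ∃ C, ∀ x ∈ Icc (0:ℝ) s, ‖B x‖ ≤ C :=
    (isCompact_Icc).exists_bound_of_continuousOn hBc
  set L : ℝ := 2 * C + 1 with hL
  -- key estimate for each ε > 0
  have key : ∀ ε > (0:ℝ), ∀ x ∈ Icc (0:ℝ) s, F x ≤ B x + ε * Real.exp (L * x) := by
    intro ε hε
    have hBε' : ∀ x ∈ Ico (0:ℝ) s,
        HasDerivWithinAt (fun x => B x + ε * Real.exp (L * x))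
          ((k - (B x) ^ 2) + ε * (Real.exp (L * x) * L)) (Ici x) x := by
      intro x hx
      have h1 : HasDerivAt (fun y : ℝ => L * y) L x := by
        simpa using (hasDerivAt_id x).const_mul L
      have h2 : HasDerivAt (fun y : ℝ => Real.exp (L * y)) (Real.exp (L * x) * L) x := h1.exp
      exact ((hB' x ⟨hx.1, le_of_lt hx.2⟩).add (h2.const_mul ε)).hasDerivWithinAt
    apply image_le_of_deriv_right_lt_deriv_boundary' hFc
      (fun x hx => (hF' x).hasDerivWithinAt)
      (by
        have : F 0 = B 0 := by simp [hF, hB, hinit]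
        rw [this]
        have : 0 < ε * Real.exp (L * 0) := by positivity
        simp only [Pi.add_apply]
        linarith)
      (hBc.add (Continuous.continuousOn (by continuity)))
      hBε'
    intro x hx heq
    have hfx := hineq (t₀ - x)
    have hFx : (F x) ^ 2 = (f (t₀ - x)) ^ 2 := by simp [hF]
    have hCx : ‖B x‖ ≤ C := hC x ⟨hx.1, le_of_lt hx.2⟩
    have hCx' : |B x| ≤ C := hCx
    have hBabs := abs_le.mp hCx'
    have hexp : 0 < Real.exp (L * x) := Real.exp_pos _
    calc deriv f (t₀ - x) ≤ k - (f (t₀ - x)) ^ 2 := hfx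
      _ = k - (F x) ^ 2 := by rw [hFx]
      _ = k - (B x + ε * Real.exp (L * x)) ^ 2 := by rw [heq]; rfl
      _ < (k - (B x) ^ 2) + ε * (Real.exp (L * x) * L) := by nlinarith [sq_nonneg (ε * Real.exp (L * x)), mul_pos hε hexp]
  -- pass to the limit ε → 0
  have hFs : F s ≤ B s := by
    apply le_of_forall_pos_le_add
    intro δ hδ
    have hexp : 0 < Real.exp (L * s) := Real.exp_pos _
    have := key (δ / Real.exp (L * s)) (by positivity) s ⟨hs0, le_refl s⟩
    calc F s ≤ B s + δ / Real.exp (L * s) * Real.exp (L * s) := this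
      _ = B s + δ := by field_simp
  have : -f (t₀ + t) ≤ -g t := by
    have h1 : t₀ - s = t₀ + t := by rw [hs]; ring
    have h2 : -s = t := by simp [hs]
    simpa [hF, hB, h1, h2] using hFs
  linarith
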